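/- (Second-order resonance identities) Let ε > 0, let κ be a positive integer, and let b ∈ ℝ. Define v₁(t) = 2√(πκ|b|/ε)·cos(2πκt/ε) and v₂(t) = 2·sign(b)·√(πκ|b|/ε)·sin(2πκt/ε). Then ∫₀^ε v₁(t) dt = 0, ∫₀^ε v₂(t) dt = 0, ∫₀^ε v₂(s)(∫₀^s v₁(r) dr) ds = εb, and ∫₀^ε v₁(s)(∫₀^s v₂(r) dr) ds = −εb. -/

import Mathlib

open Real

noncomputable section

private lemma real_sign_mul_abs (b : ℝ) : Real.sign b * |b| = b := by
  rcases lt_trichotomy b 0 with h | h | h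
  · rw [Real.sign_of_neg h, abs_of_neg h]; ring
  · simp [h]
  · rw [Real.sign_of_pos h, abs_of_pos h]; ring

private lemma int_cos_mul (ω s : ℝ) (hω : ω ≠ 0) :
    ∫ t in (0:ℝ)..s, Real.cos (ω * t) = Real.sin (ω * s) / ω := by
  rw [intervalIntegral.integral_comp_mul_left (fun x => Real.cos x) hω]
  simp [integral_cos, div_eq_inv_mul]

private lemma int_sin_mul (ω s : ℝ) (hω : ω ≠ 0) :
    ∫ t in (0:ℝ)..s, Real.sin (ω * t) = (1 - Real.cos (ω * s)) / ω := by
  rw [intervalIntegral.integral_comp_mul_left (fun x => Real.sin x) hω]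
  simp [integral_sin, div_eq_inv_mul]

private lemma int_sin_sq_mul (ω s : ℝ) (hω : ω ≠ 0) :
    ∫ t in (0:ℝ)..s, Real.sin (ω * t) ^ 2 =
      (Real.sin 0 * Real.cos 0 - Real.sin (ω * s) * Real.cos (ω * s) + ω * s - 0) / 2 / ω := by
  rw [intervalIntegral.integral_comp_mul_left (fun x => Real.sin x ^ 2) hω]
  simp [integral_sin_sq, div_eq_inv_mul]

private lemma int_cos_sq_mul (ω s : ℝ) (hω : ω ≠ 0) :
    ∫ t in (0:ℝ)..s, Real.cos (ω * t) ^ 2 =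
      (Real.cos (ω * s) * Real.sin (ω * s) - Real.cos 0 * Real.sin 0 + ω * s - 0) / 2 / ω := by
  rw [intervalIntegral.integral_comp_mul_left (fun x => Real.cos x ^ 2) hω]
  simp [integral_cos_sq, div_eq_inv_mul]

/-- **Second-order resonance identities.** For `ε > 0`, a positive integer `κ` and `b ∈ ℝ`,
let `v₁(t) = 2√(πκ|b|/ε) cos(2πκt/ε)` and `v₂(t) = 2 sign(b) √(πκ|b|/ε) sin(2πκt/ε)`.
Then `∫₀^ε v₁ = 0`, `∫₀^ε v₂ = 0`, `∫₀^ε v₂(s)(∫₀^s v₁(r) dr) ds = εb` and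
`∫₀^ε v₁(s)(∫₀^s v₂(r) dr) ds = −εb`. -/
theorem resonance_identities (ε : ℝ) (hε : 0 < ε) (κ : ℕ) (hκ : 0 < κ) (b : ℝ)
    (v₁ v₂ : ℝ → ℝ)
    (hv₁ : v₁ = fun t => 2 * Real.sqrt (π * (κ : ℝ) * |b| / ε) *
      Real.cos (2 * π * (κ : ℝ) * t / ε))
    (hv₂ : v₂ = fun t => 2 * Real.sign b * Real.sqrt (π * (κ : ℝ) * |b| / ε) *
      Real.sin (2 * π * (κ : ℝ) * t / ε)) :
    (∫ t in (0:ℝ)..ε, v₁ t = 0) ∧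
    (∫ t in (0:ℝ)..ε, v₂ t = 0) ∧
    (∫ s in (0:ℝ)..ε, v₂ s * ∫ r in (0:ℝ)..s, v₁ r) = ε * b ∧
    (∫ s in (0:ℝ)..ε, v₁ s * ∫ r in (0:ℝ)..s, v₂ r) = -(ε * b) := by
  have hπ : (0:ℝ) < π := Real.pi_pos
  have hκ' : (0:ℝ) < (κ:ℝ) := by exact_mod_cast hκ
  set ω : ℝ := 2 * π * (κ:ℝ) / ε with hωdef
  have hω : 0 < ω := by positivity
  have hωne : ω ≠ 0 := ne_of_gt hω
  set A : ℝ := Real.sqrt (π * (κ : ℝ) * |b| / ε) with hAdef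
  have hA2 : A ^ 2 = π * (κ : ℝ) * |b| / ε := by
    rw [hAdef, Real.sq_sqrt (by positivity)]
  have harg : ∀ t : ℝ, 2 * π * (κ : ℝ) * t / ε = ω * t := by
    intro t; rw [hωdef]; ring
  have hv₁' : v₁ = fun t => 2 * A * Real.cos (ω * t) := by
    funext t; simp only [hv₁, harg]
  have hv₂' : v₂ = fun t => 2 * Real.sign b * A * Real.sin (ω * t) := by
    funext t; simp only [hv₂, harg]
  have hωε : ω * ε = (κ : ℝ) * (2 * π) := by
    rw [hωdef]; field_simp
  have hsinωε : Real.sin (ω * ε) = 0 := by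
    rw [hωε]
    have : ((κ:ℝ) * (2 * π)) = ((2 * κ : ℕ) : ℝ) * π := by push_cast; ring
    rw [this, Real.sin_nat_mul_pi]
  have hcosωε : Real.cos (ω * ε) = 1 := by
    rw [hωε, Real.cos_nat_mul_two_pi]
  refine ⟨?_, ?_, ?_, ?_⟩
  · rw [hv₁']
    rw [intervalIntegral.integral_const_mul, int_cos_mul ω ε hωne, hsinωε]
    simp
  · rw [hv₂']
    rw [intervalIntegral.integral_const_mul, int_sin_mul ω ε hωne, hcosωε]
    simp
  · have hinner : ∀ s : ℝ, (∫ r in (0:ℝ)..s, v₁ r) = 2 * A * (Real.sin (ω * s) / ω) := by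
      intro s
      rw [hv₁', intervalIntegral.integral_const_mul, int_cos_mul ω s hωne]
    have : (∫ s in (0:ℝ)..ε, v₂ s * ∫ r in (0:ℝ)..s, v₁ r)
        = ∫ s in (0:ℝ)..ε, (2 * Real.sign b * A * (2 * A / ω)) * Real.sin (ω * s) ^ 2 := by
      apply intervalIntegral.integral_congr
      intro s _
      simp only [hv₂', hinner s]
      ring
    rw [this, intervalIntegral.integral_const_mul, int_sin_sq_mul ω ε hωne,
      hsinωε, hcosωε, hωε]
    have hsb : Real.sign b * |b| = b := real_sign_mul_abs b
    have hA2' : A * A = π * (κ : ℝ) * |b| / ε := by rw [← sq]; exact hA2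
    have key2 : Real.sign b * (A * A) * ε = π * (κ : ℝ) * b := by
      rw [hA2']
      field_simp
      linear_combination hsb
    simp only [Real.sin_zero, Real.cos_zero]
    rw [hωdef]
    field_simp
    linear_combination (2 * π * (κ : ℝ)) * key2
  · have hinner : ∀ s : ℝ, (∫ r in (0:ℝ)..s, v₂ r)
        = 2 * Real.sign b * A * ((1 - Real.cos (ω * s)) / ω) := by
      intro s
      rw [hv₂', intervalIntegral.integral_const_mul, int_sin_mul ω s hωne]
    have : (∫ s in (0:ℝ)..ε, v₁ s * ∫ r in (0:ℝ)..s, v₂ r)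
        = ∫ s in (0:ℝ)..ε, ((2 * A * (2 * Real.sign b * A / ω)) * Real.cos (ω * s)
            - (2 * A * (2 * Real.sign b * A / ω)) * Real.cos (ω * s) ^ 2) := by
      apply intervalIntegral.integral_congr
      intro s _
      simp only [hv₁', hinner s]
      ring
    rw [this, intervalIntegral.integral_sub, intervalIntegral.integral_const_mul,
      intervalIntegral.integral_const_mul, int_cos_mul ω ε hωne, int_cos_sq_mul ω ε hωne,
      hsinωε, hcosωε, hωε]
    · have hsb : Real.sign b * |b| = b := real_sign_mul_abs b
      have hA2' : A * A = π * (κ : ℝ) * |b| / ε := by rw [← sq]; exact hA2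
      have key2 : Real.sign b * (A * A) * ε = π * (κ : ℝ) * b := by
        rw [hA2']
        field_simp
        linear_combination hsb
      simp only [Real.sin_zero, Real.cos_zero]
      rw [hωdef]
      field_simp
      linear_combination (-(2 * π * (κ : ℝ))) * key2
    · apply IntervalIntegrable.const_mul
      exact (Real.continuous_cos.comp (continuous_const.mul continuous_id)).intervalIntegrable _ _
    · apply IntervalIntegrable.const_mul
      exact ((Real.continuous_cos.comp (continuous_const.mul continuous_id)).pow 2).intervalIntegrable _ _
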